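/- The symmetric group Sym(ℕ) of all permutations of a countably infinite set has no proper subgroup of finite index. -/

import Mathlib

namespace SymNatIdx

open Equiv

/-- shift by 1 in the first (ℤ) coordinate -/
def shift1 : Equiv.Perm (ℤ × ℕ) := (Equiv.addRight (1 : ℤ)).prodCongr (Equiv.refl ℕ)

lemma shift1_apply (x : ℤ × ℕ) : shift1 x = (x.1 + 1, x.2) := rfl

lemma shift1_pow_apply (k : ℕ) : ∀ x : ℤ × ℕ, (shift1 ^ k) x = (x.1 + k, x.2) := by
  induction k with
  | zero => intro x; simp
  | succ n ih =>
    intro x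
    rw [pow_succ, Equiv.Perm.mul_apply, ih, shift1_apply]
    refine Prod.ext ?_ rfl
    push_cast
    ring

lemma permCongr_mul {α β : Type*} (e : α ≃ β) (p r : Equiv.Perm α) :
    e.permCongr (p * r) = e.permCongr p * e.permCongr r := by
  ext x
  simp [Equiv.permCongr_apply, Equiv.Perm.mul_apply]

lemma permCongr_inv {α β : Type*} (e : α ≃ β) (p : Equiv.Perm α) :
    e.permCongr p⁻¹ = (e.permCongr p)⁻¹ := by
  ext x
  rw [Equiv.permCongr_apply]
  apply (e.permCongr p).injective
  simp [Equiv.permCongr_apply]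

lemma permCongr_pow {α β : Type*} (e : α ≃ β) (p : Equiv.Perm α) (k : ℕ) :
    e.permCongr (p ^ k) = (e.permCongr p) ^ k := by
  induction k with
  | zero =>
    ext x
    simp [Equiv.permCongr_apply]
  | succ n ih => rw [pow_succ, pow_succ, permCongr_mul, ih]

/-- A permutation that is "conjugate to the shift on ℤ × ℕ" is a q-th power. -/
lemma exists_pow_eq (q : ℕ) (hq : q ≠ 0) (τ : Equiv.Perm ℕ) (ψ : (ℤ × ℕ) ≃ ℕ)
    (hψ : ∀ (a : ℤ) (n : ℕ), ψ (a + 1, n) = τ (ψ (a, n))) : ∃ u : Equiv.Perm ℕ, u ^ q = τ := by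
  haveI : NeZero q := ⟨hq⟩
  set e : Fin q × ℕ ≃ ℕ := (Equiv.prodComm _ _).trans (Nat.divModEquiv q).symm with he
  set θ : Equiv.Perm (ℤ × ℕ) :=
    (((Int.divModEquiv q).prodCongr (Equiv.refl ℕ)).trans
      ((Equiv.prodAssoc ℤ (Fin q) ℕ).trans ((Equiv.refl ℤ).prodCongr e))) with hθdef
  have hθ : ∀ x : ℤ × ℕ, θ (x.1 + q, x.2) = shift1 (θ x) := by
    rintro ⟨a, n⟩
    have h1 : (a + (q : ℤ)) / (q : ℤ) = a / q + 1 := by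
      have := Int.add_mul_ediv_right a 1 (by exact_mod_cast hq : (q : ℤ) ≠ 0)
      simpa using this
    have h2 : (a + (q : ℤ)).natMod q = a.natMod q := by
      unfold Int.natMod
      have : (a + (q : ℤ)) % q = a % q := by
        have := Int.add_mul_emod_self_left (a := a) (b := (q : ℤ)) (c := 1)
        simpa using this
      rw [this]
    simp only [hθdef, Equiv.trans_apply, Equiv.prodCongr_apply, Equiv.coe_refl,
      Prod.map_apply, id_eq, Int.divModEquiv, Equiv.coe_fn_mk, Equiv.prodAssoc_apply,
      shift1_apply, h1, h2]
  -- v = θ * shift1 * θ⁻¹ satisfies v ^ q = shift1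
  have hv : (θ * shift1 * θ⁻¹) ^ q = shift1 := by
    rw [conj_pow]
    apply Equiv.ext
    intro x
    have h1 : (shift1 ^ q) (θ⁻¹ x) = ((θ⁻¹ x).1 + q, (θ⁻¹ x).2) := shift1_pow_apply q _
    calc (θ * shift1 ^ q * θ⁻¹) x = θ ((shift1 ^ q) (θ⁻¹ x)) := rfl
      _ = θ ((θ⁻¹ x).1 + q, (θ⁻¹ x).2) := by rw [h1]
      _ = shift1 (θ (θ⁻¹ x)) := hθ _
      _ = shift1 x := by simp
  refine ⟨ψ.permCongr (θ * shift1 * θ⁻¹), ?_⟩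
  rw [← permCongr_pow, hv]
  apply Equiv.ext
  intro x
  rw [Equiv.permCongr_apply]
  have := hψ (ψ.symm x).1 (ψ.symm x).2
  calc ψ (shift1 (ψ.symm x)) = ψ ((ψ.symm x).1 + 1, (ψ.symm x).2) := rfl
    _ = τ (ψ ((ψ.symm x).1, (ψ.symm x).2)) := this
    _ = τ x := by simp

/-- shift by 1 in the second (ℤ) coordinate of ℕ × ℤ -/
def shiftN : Equiv.Perm (ℕ × ℤ) := (Equiv.refl ℕ).prodCongr (Equiv.addRight (1 : ℤ))

/-- The permutation acting as π at level 0 combined with a shift. -/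
def Dmap (π : Equiv.Perm ℕ) : Equiv.Perm (ℕ × ℤ) where
  toFun x := (if x.2 = 0 then π x.1 else x.1, x.2 + 1)
  invFun x := (if x.2 = 1 then π.symm x.1 else x.1, x.2 - 1)
  left_inv := by
    rintro ⟨x, z⟩
    by_cases h : z = 0 <;> simp [h] <;> omega
  right_inv := by
    rintro ⟨x, z⟩
    by_cases h : z = 1 <;> simp [h] <;> omega

lemma phi_apply (π : Equiv.Perm ℕ) (x : ℕ × ℤ) :
    (shiftN⁻¹ * Dmap π) x = (if x.2 = 0 then π x.1 else x.1, x.2) := by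
  rcases x with ⟨x, z⟩
  have h1 : (shiftN⁻¹ * Dmap π) (x, z) = shiftN⁻¹ ((Dmap π) (x, z)) := rfl
  have h2 : ∀ y : ℕ × ℤ, shiftN⁻¹ y = (y.1, y.2 - 1) := by
    intro y
    apply shiftN.injective
    show shiftN (shiftN⁻¹ y) = _
    simp only [Equiv.Perm.inv_def, Equiv.apply_symm_apply]
    show y = (y.1, y.2 - 1 + 1)
    refine Prod.ext rfl ?_
    omega
  rw [h1, h2]
  simp [Dmap]

variable {N : Subgroup (Equiv.Perm ℕ)} [N.Normal]

lemma mem_of_triv (hq : N.index ≠ 0) (τ : Equiv.Perm ℕ) (ψ : (ℤ × ℕ) ≃ ℕ)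
    (hψ : ∀ (a : ℤ) (n : ℕ), ψ (a + 1, n) = τ (ψ (a, n))) : τ ∈ N := by
  obtain ⟨u, hu⟩ := exists_pow_eq N.index hq τ ψ hψ
  exact hu ▸ N.pow_index_mem u

/-- the key generator lemma: any conjugate of (π at level 0) lies in N. -/
lemma phi_mem (hq : N.index ≠ 0) (v : (ℕ × ℤ) ≃ ℕ) (π : Equiv.Perm ℕ) :
    v.permCongr (shiftN⁻¹ * Dmap π) ∈ N := by
  have h1 : v.permCongr shiftN ∈ N := by
    refine mem_of_triv hq _ ((Equiv.prodComm ℤ ℕ).trans v) ?_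
    intro a n
    simp only [Equiv.trans_apply, Equiv.prodComm_apply, Prod.swap_prod_mk,
      Equiv.permCongr_apply, Equiv.symm_apply_apply]
    rfl
  have h2 : v.permCongr (Dmap π) ∈ N := by
    set ψD : (ℤ × ℕ) ≃ (ℕ × ℤ) :=
      { toFun := fun x => (if 0 < x.1 then π x.2 else x.2, x.1)
        invFun := fun y => (y.2, if 0 < y.2 then π.symm y.1 else y.1)
        left_inv := by
          rintro ⟨a, n⟩
          by_cases h : 0 < a <;> simp [h]
        right_inv := by
          rintro ⟨x, z⟩
          by_cases h : 0 < z <;> simp [h] } with hψD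
    refine mem_of_triv hq _ (ψD.trans v) ?_
    intro a n
    simp only [Equiv.trans_apply, Equiv.permCongr_apply, Equiv.symm_apply_apply]
    congr 1
    show ψD (a + 1, n) = (Dmap π) (ψD (a, n))
    simp only [hψD, Equiv.coe_fn_mk, Dmap]
    rcases lt_trichotomy a 0 with h | h | h
    · have h1 : ¬ (0 < a + 1) := by omega
      have h2 : ¬ (0 < a) := by omega
      have h3 : a ≠ 0 := by omega
      simp [h1, h2, h3]
    · subst h
      norm_num
    · have h1 : 0 < a + 1 := by omega
      have h2 : a ≠ 0 := by omega
      simp [h1, h, h2]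
  have h3 : v.permCongr (shiftN⁻¹ * Dmap π) = (v.permCongr shiftN)⁻¹ * v.permCongr (Dmap π) := by
    rw [permCongr_mul, permCongr_inv]
  rw [h3]
  exact N.mul_mem (N.inv_mem h1) h2

lemma fix_infinite_mem (hq : N.index ≠ 0) (ρ : Equiv.Perm ℕ)
    (h : {x | ρ x = x}.Infinite) : ρ ∈ N := by
  classical
  set Fx : Set ℕ := {x | ρ x = x} with hFx
  let j : ℕ ↪ ↥Fx := h.natEmbedding
  have hj : Function.Injective fun n => ((j n : ℕ)) := fun m n hmn =>
    j.injective (Subtype.coe_injective hmn)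
  set F1 : Set ℕ := Set.range (fun n => ((j (2 * n) : ℕ))) with hF1
  have hF1Fx : F1 ⊆ Fx := by
    rintro _ ⟨n, rfl⟩
    exact (j (2 * n)).2
  have hF1inf : F1.Infinite := Set.infinite_range_of_injective
    (fun m n hmn => by have := hj hmn; omega)
  have hAinf : (F1ᶜ).Infinite := by
    refine Set.Infinite.mono ?_ (Set.infinite_range_of_injective
      (f := fun n => ((j (2 * n + 1) : ℕ))) (fun m n hmn => by have := hj hmn; omega))
    rintro _ ⟨n, rfl⟩
    rintro ⟨m, hm⟩
    have := hj hm
    omega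
  haveI : Infinite ↥F1 := hF1inf.to_subtype
  haveI : Infinite ↥(F1ᶜ) := hAinf.to_subtype
  haveI : Nonempty {z : ℤ // ¬ z = 0} := ⟨⟨1, by norm_num⟩⟩
  haveI : Infinite {z : ℤ // ¬ z = 0} := Infinite.of_injective
    (fun n : ℕ => (⟨(n : ℤ) + 1, by omega⟩ : {z : ℤ // ¬ z = 0}))
    (fun m n hmn => by have := Subtype.mk.injEq .. ▸ hmn; omega)
  obtain ⟨a⟩ : Nonempty (↥(F1ᶜ) ≃ ℕ) := nonempty_equiv_of_countable
  obtain ⟨b⟩ : Nonempty (↥F1 ≃ ℕ × {z : ℤ // ¬ z = 0}) := nonempty_equiv_of_countable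
  set w : (ℕ × ℤ) ≃ ℕ :=
    { toFun := fun x => if h : x.2 = 0 then ((a.symm x.1 : ↥(F1ᶜ)) : ℕ)
        else ((b.symm (x.1, ⟨x.2, h⟩) : ↥F1) : ℕ)
      invFun := fun y => if h : y ∈ F1 then ((b ⟨y, h⟩).1, ((b ⟨y, h⟩).2 : ℤ))
        else (a ⟨y, h⟩, 0)
      left_inv := by
        rintro ⟨x, z⟩
        by_cases hz : z = 0
        · subst hz
          dsimp only
          rw [dif_pos rfl]
          have hy : ((a.symm x : ↥(F1ᶜ)) : ℕ) ∉ F1 := (a.symm x).2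
          rw [dif_neg hy]
          simp
        · dsimp only
          rw [dif_neg hz]
          have hy : ((b.symm (x, ⟨z, hz⟩) : ↥F1) : ℕ) ∈ F1 := (b.symm (x, ⟨z, hz⟩)).2
          rw [dif_pos hy]
          have : (⟨((b.symm (x, ⟨z, hz⟩) : ↥F1) : ℕ), hy⟩ : ↥F1) = b.symm (x, ⟨z, hz⟩) :=
            Subtype.coe_eta _ _
          rw [this, Equiv.apply_symm_apply]
      right_inv := by
        intro y
        by_cases hy : y ∈ F1
        · dsimp only
          rw [dif_pos hy]
          have h2 : ((b ⟨y, hy⟩).2 : ℤ) ≠ 0 := (b ⟨y, hy⟩).2.2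
          rw [dif_neg h2]
          have : ((((b ⟨y, hy⟩).1 , (⟨((b ⟨y, hy⟩).2 : ℤ), h2⟩ : {z : ℤ // ¬ z = 0}))) :
              ℕ × {z : ℤ // ¬ z = 0}) = b ⟨y, hy⟩ := by
            refine Prod.ext rfl (Subtype.coe_eta _ _)
          rw [this, Equiv.symm_apply_apply]
        · dsimp only
          rw [dif_neg hy]
          rw [dif_pos rfl]
          simp } with hw
  have hw0 : ∀ x : ℕ, w (x, 0) = ((a.symm x : ↥(F1ᶜ)) : ℕ) := by
    intro x
    simp only [hw, Equiv.coe_fn_mk]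
    simp
  have hws1 : ∀ (y : ℕ) (hy : y ∈ F1),
      w.symm y = ((b ⟨y, hy⟩).1, ((b ⟨y, hy⟩).2 : ℤ)) := by
    intro y hy
    simp only [hw, Equiv.coe_fn_symm_mk]
    rw [dif_pos hy]
  have hws2 : ∀ (y : ℕ) (hy : y ∉ F1), w.symm y = (a ⟨y, hy⟩, 0) := by
    intro y hy
    simp only [hw, Equiv.coe_fn_symm_mk]
    rw [dif_neg hy]
  have hA : ∀ x : ℕ, x ∈ F1ᶜ ↔ ρ x ∈ F1ᶜ := by
    intro x
    simp only [Set.mem_compl_iff]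
    constructor
    · intro hx hc
      have h1 : ρ (ρ x) = ρ x := hF1Fx hc
      have h2 : ρ x = x := ρ.injective h1
      exact hx (h2 ▸ hc)
    · intro hx hc
      have h2 : ρ x = x := hF1Fx hc
      exact hx (h2.symm ▸ hc)
  set ρA : Equiv.Perm ↥(F1ᶜ) := Equiv.Perm.subtypePerm ρ (fun x => (hA x).symm) with hρA
  set π0 : Equiv.Perm ℕ := a.permCongr ρA with hπ0
  have key : ρ = w.permCongr (shiftN⁻¹ * Dmap π0) := by
    apply Equiv.ext
    intro y
    rw [Equiv.permCongr_apply, phi_apply]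
    by_cases hy : y ∈ F1
    · rw [hws1 y hy]
      have h2 : ((b ⟨y, hy⟩).2 : ℤ) ≠ 0 := (b ⟨y, hy⟩).2.2
      rw [if_neg h2]
      have : w ((b ⟨y, hy⟩).1, ((b ⟨y, hy⟩).2 : ℤ)) = w (w.symm y) := by rw [hws1 y hy]
      rw [this, Equiv.apply_symm_apply]
      exact hF1Fx hy
    · rw [hws2 y hy]
      simp only [if_pos]
      rw [hw0, hπ0, Equiv.permCongr_apply, Equiv.symm_apply_apply, hρA]
      have : ρ.subtypePerm (fun x => (hA x).symm) (a.symm (a ⟨y, hy⟩)) = ρ.subtypePerm (fun x => (hA x).symm) ⟨y, hy⟩ := by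
        rw [Equiv.symm_apply_apply]
      rw [this]
      rfl
  rw [key]
  exact phi_mem hq w π0

/-- Every involution lies in N. -/
lemma invol_mem (hq : N.index ≠ 0) (κ : Equiv.Perm ℕ)
    (hκ : ∀ x, κ (κ x) = x) : κ ∈ N := by
  classical
  by_cases hFix : {x | κ x = x}.Infinite
  · exact fix_infinite_mem hq κ hFix
  · -- the fixed set is finite, so the set of moved points is infinite
    set R : Set ℕ := {x | x < κ x} with hR
    have hRinf : R.Infinite := by
      intro hfin
      apply Set.infinite_univ (α := ℕ)
      have hsupp : {x | ¬ κ x = x} ⊆ R ∪ (κ '' R) := by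
        intro x hx
        rcases lt_trichotomy x (κ x) with h | h | h
        · exact Or.inl h
        · exact absurd h.symm hx
        · refine Or.inr ⟨κ x, ?_, hκ x⟩
          show κ x < κ (κ x)
          rw [hκ x]
          exact h
      have h1 : {x | ¬ κ x = x}.Finite := ((hfin.union (hfin.image κ)).subset hsupp)
      have h2 : (Set.univ : Set ℕ) ⊆ {x | ¬ κ x = x} ∪ {x | κ x = x} := by
        intro x _
        by_cases hc : κ x = x
        · exact Or.inr hc
        · exact Or.inl hc
      exact (h1.union (Set.not_infinite.mp hFix)).subset h2
    let j : ℕ ↪ ↥R := hRinf.natEmbedding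
    have hj : Function.Injective fun n => ((j n : ℕ)) := fun m n hmn =>
      j.injective (Subtype.coe_injective hmn)
    set P : Set ℕ := Set.range (fun n => ((j (2 * n) : ℕ))) with hP
    have hPR : P ⊆ R := by
      rintro _ ⟨n, rfl⟩
      exact (j (2 * n)).2
    have hPinf : P.Infinite := Set.infinite_range_of_injective
      (fun m n hmn => by have := hj hmn; omega)
    set S : Set ℕ := {x | x ∈ P ∨ κ x ∈ P} with hS
    have hSinv : ∀ x, x ∈ S ↔ κ x ∈ S := by
      intro x
      constructor
      · rintro (h | h)
        · exact Or.inr (by rwa [hκ x])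
        · exact Or.inl h
      · rintro (h | h)
        · exact Or.inr h
        · exact Or.inl (by rwa [hκ x] at h)
    set f1 : ℕ → ℕ := fun x => if x ∈ S then κ x else x with hf1def
    set f2 : ℕ → ℕ := fun x => if x ∈ S then x else κ x with hf2def
    have hf1 : Function.Involutive f1 := by
      intro x
      by_cases h : x ∈ S
      · have h2 : κ x ∈ S := (hSinv x).1 h
        simp only [hf1def, if_pos h, if_pos h2, hκ x]
      · simp only [hf1def, if_neg h]
    have hf2 : Function.Involutive f2 := by
      intro x
      by_cases h : x ∈ S
      · simp only [hf2def, if_pos h]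
      · have h2 : κ x ∉ S := fun hc => h ((hSinv x).2 hc)
        simp only [hf2def, if_neg h, if_neg h2, hκ x]
    have hprod : κ = hf1.toPerm f1 * hf2.toPerm f2 := by
      apply Equiv.ext
      intro x
      rw [Equiv.Perm.mul_apply, Function.Involutive.coe_toPerm, Function.Involutive.coe_toPerm]
      by_cases h : x ∈ S
      · have h2 : κ x ∈ S := (hSinv x).1 h
        simp only [hf1def, hf2def, if_pos h]
      · have h2 : κ x ∉ S := fun hc => h ((hSinv x).2 hc)
        simp only [hf1def, hf2def, if_neg h, if_neg h2]
    have hfix1 : {x | hf1.toPerm f1 x = x}.Infinite := by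
      refine Set.Infinite.mono ?_ (Set.infinite_range_of_injective
        (f := fun n => ((j (2 * n + 1) : ℕ))) (fun m n hmn => by have := hj hmn; omega))
      rintro _ ⟨n, rfl⟩
      have hxR : ((j (2 * n + 1) : ℕ)) ∈ R := (j (2 * n + 1)).2
      have h1 : ((j (2 * n + 1) : ℕ)) ∉ P := by
        rintro ⟨m, hm⟩
        have := hj hm
        omega
      have h2 : κ ((j (2 * n + 1) : ℕ)) ∉ P := by
        intro hc
        have hcR := hPR hc
        have hlt : κ ((j (2 * n + 1) : ℕ)) < κ (κ ((j (2 * n + 1) : ℕ))) := hcR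
        rw [hκ] at hlt
        exact absurd hxR (by simp only [hR, Set.mem_setOf_eq]; omega)
      have hxS : ((j (2 * n + 1) : ℕ)) ∉ S := by
        rintro (hc | hc)
        · exact h1 hc
        · exact h2 hc
      show hf1.toPerm f1 _ = _
      rw [Function.Involutive.coe_toPerm]
      simp only [hf1def, if_neg hxS]
    have hfix2 : {x | hf2.toPerm f2 x = x}.Infinite := by
      refine Set.Infinite.mono ?_ hPinf
      intro x hx
      show hf2.toPerm f2 x = x
      rw [Function.Involutive.coe_toPerm]
      have hxS : x ∈ S := Or.inl hx
      simp only [hf2def]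
      rw [if_pos hxS]
    rw [hprod]
    exact N.mul_mem (fix_infinite_mem hq _ hfix1) (fix_infinite_mem hq _ hfix2)

section Reflection

variable (π : Equiv.Perm ℕ)

/-- the orbit equivalence relation of a permutation -/
def orbRel : Setoid ℕ where
  r x y := ∃ k : ℤ, (π ^ k) x = y
  iseqv := by
    constructor
    · intro x
      exact ⟨0, rfl⟩
    · rintro x y ⟨k, hk⟩
      refine ⟨-k, ?_⟩
      rw [← hk, ← Equiv.Perm.mul_apply, ← zpow_add, neg_add_cancel, zpow_zero,
        Equiv.Perm.one_apply]
    · rintro x y z ⟨k, hk⟩ ⟨l, hl⟩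
      refine ⟨l + k, ?_⟩
      rw [zpow_add, Equiv.Perm.mul_apply, hk, hl]

/-- a representative of the orbit of x -/
noncomputable def rp (x : ℕ) : ℕ := (Quotient.mk (orbRel π) x).out

lemma rp_spec (x : ℕ) : ∃ k : ℤ, (π ^ k) (rp π x) = x :=
  Quotient.exact (Quotient.out_eq (Quotient.mk (orbRel π) x))

lemma rp_congr {x y : ℕ} (h : ∃ k : ℤ, (π ^ k) x = y) : rp π x = rp π y := by
  unfold rp
  rw [Quotient.sound (h : (orbRel π).r x y)]

/-- the chosen position of x in its orbit -/
noncomputable def kk (x : ℕ) : ℤ := (rp_spec π x).choose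

lemma kk_spec (x : ℕ) : (π ^ kk π x) (rp π x) = x := (rp_spec π x).choose_spec

lemma neg_trick {r : ℕ} {c d : ℤ} (h : (π ^ c) r = (π ^ d) r) :
    (π ^ (-c)) r = (π ^ (-d)) r := by
  have h2 := congrArg (⇑(π ^ (-c - d))) h
  rw [← Equiv.Perm.mul_apply, ← Equiv.Perm.mul_apply, ← zpow_add, ← zpow_add] at h2
  rw [(by ring : -c - d + c = -d), (by ring : -c - d + d = -c)] at h2
  exact h2.symm

/-- reflection of each orbit around the chosen representative -/
noncomputable def iota (x : ℕ) : ℕ := (π ^ (-(kk π x))) (rp π x)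

lemma rp_iota (x : ℕ) : rp π (iota π x) = rp π x := by
  refine rp_congr π ⟨kk π x + kk π x, ?_⟩
  unfold iota
  rw [← Equiv.Perm.mul_apply, ← zpow_add, (by ring : kk π x + kk π x + -(kk π x) = kk π x)]
  exact kk_spec π x

lemma iota_invol : Function.Involutive (iota π) := by
  intro x
  have h1 : (π ^ kk π (iota π x)) (rp π x) = (π ^ (-(kk π x))) (rp π x) := by
    have h := kk_spec π (iota π x)
    rw [rp_iota] at h
    exact h
  have h2 := neg_trick π h1
  rw [neg_neg] at h2
  calc iota π (iota π x) = (π ^ (-(kk π (iota π x)))) (rp π (iota π x)) := rfl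
    _ = (π ^ (-(kk π (iota π x)))) (rp π x) := by rw [rp_iota]
    _ = (π ^ kk π x) (rp π x) := h2
    _ = x := kk_spec π x

lemma rp_apply (x : ℕ) : rp π (π x) = rp π x :=
  rp_congr π ⟨-1, by rw [zpow_neg_one]; exact π.symm_apply_apply x⟩

lemma iota_comm (x : ℕ) : iota π (π x) = π⁻¹ (iota π x) := by
  have h1 : (π ^ kk π (π x)) (rp π x) = (π ^ (kk π x + 1)) (rp π x) := by
    have h := kk_spec π (π x)
    rw [rp_apply] at h
    rw [h, (by ring : kk π x + 1 = 1 + kk π x), zpow_add, zpow_one, Equiv.Perm.mul_apply,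
      kk_spec]
  have h2 := neg_trick π h1
  calc iota π (π x) = (π ^ (-(kk π (π x)))) (rp π (π x)) := rfl
    _ = (π ^ (-(kk π (π x)))) (rp π x) := by rw [rp_apply]
    _ = (π ^ (-(kk π x + 1))) (rp π x) := h2
    _ = π⁻¹ ((π ^ (-(kk π x))) (rp π x)) := by
        rw [(by ring : -(kk π x + 1) = -1 + -(kk π x)), zpow_add, Equiv.Perm.mul_apply,
          zpow_neg_one]
    _ = π⁻¹ (iota π x) := rfl

lemma iota2_invol : Function.Involutive (fun x => iota π (π x)) := by
  intro x
  dsimp only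
  rw [iota_comm π (iota π (π x)), (iota_invol π) (π x)]
  exact π.symm_apply_apply x

lemma perm_eq_mul_invol : ∃ a b : Equiv.Perm ℕ,
    (∀ x, a (a x) = x) ∧ (∀ x, b (b x) = x) ∧ π = a * b := by
  refine ⟨(iota_invol π).toPerm _, (iota2_invol π).toPerm _, ?_, ?_, ?_⟩
  · intro x
    rw [Function.Involutive.coe_toPerm]
    exact (iota_invol π) x
  · intro x
    rw [Function.Involutive.coe_toPerm]
    exact (iota2_invol π) x
  · apply Equiv.ext
    intro x
    rw [Equiv.Perm.mul_apply, Function.Involutive.coe_toPerm, Function.Involutive.coe_toPerm]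
    exact ((iota_invol π) (π x)).symm

end Reflection

end SymNatIdx

/-- The symmetric group on a countably infinite set has no proper subgroup of finite
index. -/
theorem symNat_no_proper_finite_index (H : Subgroup (Equiv.Perm ℕ)) (hH : H ≠ ⊤) :
    H.index = 0 := by
  by_contra h
  haveI : H.FiniteIndex := ⟨h⟩
  set N := H.normalCore with hN
  haveI : N.Normal := Subgroup.normalCore_normal H
  haveI : N.FiniteIndex := Subgroup.finiteIndex_normalCore (H := H)
  have hq : N.index ≠ 0 := Subgroup.FiniteIndex.index_ne_zero
  have hall : ∀ π : Equiv.Perm ℕ, π ∈ N := by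
    intro π
    obtain ⟨a, b, ha, hb, hab⟩ := SymNatIdx.perm_eq_mul_invol π
    rw [hab]
    exact N.mul_mem (SymNatIdx.invol_mem hq a ha) (SymNatIdx.invol_mem hq b hb)
  apply hH
  rw [eq_top_iff]
  intro x _
  exact H.normalCore_le (hall x)
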